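/- arXiv:1901.06771 — 4 statements merged into one kernel-verified Lean document; each statement's English description precedes it below -/
import Mathlib

section
/- A word is a reduced word for some permutation in S∞ if and only if its equivalence class under the braid congruence contains no word with two equal adjacent letters. -/
/-- The simple transposition `s_i = (i, i+1)`. -/
def sperm (i : ℕ) : Equiv.Perm ℕ := Equiv.swap i (i + 1)

/-- A word on the positive integers. -/
def PosWord (w : List ℕ) : Prop := ∀ x ∈ w, 0 < x

/-- The Coxeter length of a permutation: its number of inversions. -/
noncomputable def invLength (z : Equiv.Perm ℕ) : ℕ :=
  Set.ncard {p : ℕ × ℕ | p.1 < p.2 ∧ z p.2 < z p.1}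

/-- A word `i₁⋯i_l` is reduced if `s_{i₁}⋯s_{i_l}` has Coxeter length `l`. -/
noncomputable def Reduced (w : List ℕ) : Prop :=
  invLength ((w.map sperm).prod) = w.length

/- basic sperm lemmas -/
lemma sperm_apply (i x : ℕ) : sperm i x = if x = i then i + 1 else if x = i + 1 then i else x := by
  rw [sperm, Equiv.swap_apply_def]

lemma sperm_self (i : ℕ) : sperm i i = i + 1 := by simp [sperm]

lemma sperm_succ (i : ℕ) : sperm i (i + 1) = i := by simp [sperm]

lemma sperm_apply_ne {i x : ℕ} (h1 : x ≠ i) (h2 : x ≠ i + 1) : sperm i x = x := by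
  rw [sperm_apply]; split_ifs <;> omega

lemma sperm_sperm (i x : ℕ) : sperm i (sperm i x) = x := by
  simp [sperm]

lemma sperm_mul_self (i : ℕ) : sperm i * sperm i = 1 := by
  simp [sperm]

lemma mul_sperm_cancel (z : Equiv.Perm ℕ) (i : ℕ) : z * sperm i * sperm i = z := by
  rw [mul_assoc, sperm_mul_self, mul_one]

lemma sperm_comm {i j : ℕ} (h : i + 1 < j ∨ j + 1 < i) :
    sperm i * sperm j = sperm j * sperm i := by
  ext x
  simp only [Equiv.Perm.mul_apply, sperm_apply]
  split_ifs <;> omega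

set_option maxHeartbeats 2000000 in
lemma sperm_braid (i : ℕ) :
    sperm i * (sperm (i+1) * sperm i) = sperm (i+1) * (sperm i * sperm (i+1)) := by
  ext x
  simp only [Equiv.Perm.mul_apply, sperm_apply]
  split_ifs <;> omega

set_option maxHeartbeats 2000000 in
lemma comm4 {i j : ℕ} (h : i + 1 < j ∨ j + 1 < i) :
    sperm i * (sperm j * (sperm i * sperm j)) = 1 := by
  ext x
  simp only [Equiv.Perm.mul_apply, sperm_apply, Equiv.Perm.one_apply]
  split_ifs <;> omega

lemma cancel4 (a b : ℕ) : sperm a * (sperm b * (sperm b * sperm a)) = 1 := by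
  rw [show sperm b * (sperm b * sperm a) = sperm a by rw [← mul_assoc, sperm_mul_self, one_mul],
    sperm_mul_self]

set_option maxHeartbeats 2000000 in
lemma pure_braid4 (i : ℕ) :
    sperm (i+1) * (sperm i * (sperm (i+1) * sperm i)) = sperm i * sperm (i+1) := by
  ext x
  simp only [Equiv.Perm.mul_apply, sperm_apply]
  split_ifs <;> omega

/- Inversion sets -/
def InvSet (z : Equiv.Perm ℕ) : Set (ℕ × ℕ) := {p | p.1 < p.2 ∧ z p.2 < z p.1}

lemma invLength_def (z : Equiv.Perm ℕ) : invLength z = (InvSet z).ncard := rfl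

lemma InvSet_one : InvSet 1 = ∅ := by
  ext p; simp only [InvSet, Set.mem_setOf_eq, Equiv.Perm.one_apply, Set.mem_empty_iff_false,
    iff_false]
  omega

lemma invLength_one : invLength (1 : Equiv.Perm ℕ) = 0 := by
  rw [invLength_def, InvSet_one, Set.ncard_empty]

def smap (i : ℕ) (p : ℕ × ℕ) : ℕ × ℕ :=
  (min (sperm i p.1) (sperm i p.2), max (sperm i p.1) (sperm i p.2))

lemma sperm_lt {i a b : ℕ} (hab : a < b) (hne : ¬(a = i ∧ b = i + 1)) :
    sperm i a < sperm i b := by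
  simp only [sperm_apply]
  split_ifs <;> omega

lemma smap_eq {i a b : ℕ} (h : sperm i a < sperm i b) :
    smap i (a, b) = (sperm i a, sperm i b) := by
  simp [smap, min_eq_left h.le, max_eq_right h.le]

lemma pair_ne_iff {a b i : ℕ} : (a, b) ≠ (i, i + 1) ↔ ¬(a = i ∧ b = i + 1) := by
  simp [Prod.ext_iff]

lemma smap_sorted {i : ℕ} {p : ℕ × ℕ} (h : p.1 < p.2) (hne : p ≠ (i, i + 1)) :
    (smap i p).1 < (smap i p).2 := by
  obtain ⟨a, b⟩ := p
  have h1 := sperm_lt h (pair_ne_iff.mp hne)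
  rw [smap_eq h1]
  exact h1

lemma smap_smap {i : ℕ} {p : ℕ × ℕ} (h : p.1 < p.2) (hne : p ≠ (i, i + 1)) :
    smap i (smap i p) = p := by
  obtain ⟨a, b⟩ := p
  have h1 := sperm_lt h (pair_ne_iff.mp hne)
  rw [smap_eq h1]
  have h2 : sperm i (sperm i a) < sperm i (sperm i b) := by
    rw [sperm_sperm, sperm_sperm]; exact h
  rw [smap_eq h2, sperm_sperm, sperm_sperm]

lemma smap_ne {i : ℕ} {p : ℕ × ℕ} (h : p.1 < p.2) (hne : p ≠ (i, i + 1)) :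
    smap i p ≠ (i, i + 1) := by
  obtain ⟨a, b⟩ := p
  have h1 := sperm_lt h (pair_ne_iff.mp hne)
  rw [smap_eq h1]
  intro hc
  rw [Prod.ext_iff] at hc
  obtain ⟨e1, e2⟩ := hc
  have ha : a = i + 1 := by
    have := congrArg (sperm i) e1
    rwa [sperm_sperm, sperm_self] at this
  have hb : b = i := by
    have := congrArg (sperm i) e2
    rwa [sperm_sperm, sperm_succ] at this
  omega

lemma mem_invSet_mul_iff {z : Equiv.Perm ℕ} {i : ℕ} {p : ℕ × ℕ}
    (h : p.1 < p.2) (hne : p ≠ (i, i + 1)) :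
    p ∈ InvSet (z * sperm i) ↔ smap i p ∈ InvSet z := by
  obtain ⟨a, b⟩ := p
  have h1 := sperm_lt h (pair_ne_iff.mp hne)
  rw [smap_eq h1]
  simp only [InvSet, Set.mem_setOf_eq, Equiv.Perm.mul_apply]
  constructor
  · rintro ⟨-, hz⟩; exact ⟨h1, hz⟩
  · rintro ⟨-, hz⟩; exact ⟨h, hz⟩

lemma invSet_mul_diff (z : Equiv.Perm ℕ) (i : ℕ) :
    InvSet (z * sperm i) \ {(i, i + 1)} = smap i '' (InvSet z \ {(i, i + 1)}) := by
  ext p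
  constructor
  · rintro ⟨hp, hne⟩
    rw [Set.mem_singleton_iff] at hne
    have hs : p.1 < p.2 := hp.1
    refine ⟨smap i p, ⟨?_, ?_⟩, smap_smap hs hne⟩
    · exact (mem_invSet_mul_iff hs hne).mp hp
    · rw [Set.mem_singleton_iff]; exact smap_ne hs hne
  · rintro ⟨q, ⟨hq, hqne⟩, rfl⟩
    rw [Set.mem_singleton_iff] at hqne
    have hs : q.1 < q.2 := hq.1
    have hs' := smap_sorted hs hqne
    have hne' := smap_ne hs hqne
    constructor
    · rw [mem_invSet_mul_iff hs' hne', smap_smap hs hqne]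
      exact hq
    · rw [Set.mem_singleton_iff]; exact hne'

lemma invSet_mul_finite {z : Equiv.Perm ℕ} (hz : (InvSet z).Finite) (i : ℕ) :
    (InvSet (z * sperm i)).Finite := by
  have hsub : InvSet (z * sperm i) ⊆ (smap i '' (InvSet z \ {(i, i + 1)})) ∪ {(i, i + 1)} := by
    intro p hp
    by_cases hpe : p = (i, i + 1)
    · right; exact hpe
    · left; rw [← invSet_mul_diff]; exact ⟨hp, hpe⟩
  exact (((hz.diff (t := {(i, i + 1)})).image _).union (Set.finite_singleton _)).subset hsub

lemma smap_injOn (z : Equiv.Perm ℕ) (i : ℕ) :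
    Set.InjOn (smap i) (InvSet z \ {(i, i + 1)}) := by
  rintro q1 ⟨hq1, hq1e⟩ q2 ⟨hq2, hq2e⟩ he
  rw [Set.mem_singleton_iff] at hq1e hq2e
  rw [← smap_smap hq1.1 hq1e, he, smap_smap hq2.1 hq2e]

lemma invLength_mul_of_lt {z : Equiv.Perm ℕ} (hz : (InvSet z).Finite) {i : ℕ}
    (h : z i < z (i + 1)) : invLength (z * sperm i) = invLength z + 1 := by
  have hT := invSet_mul_finite hz i
  have hp0T : (i, i + 1) ∈ InvSet (z * sperm i) := by
    refine ⟨by omega, ?_⟩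
    show z (sperm i (i + 1)) < z (sperm i i)
    rwa [sperm_succ, sperm_self]
  have hp0S : (i, i + 1) ∉ InvSet z := by
    rintro ⟨-, hc⟩; simp only at hc; omega
  rw [invLength_def, invLength_def]
  calc (InvSet (z * sperm i)).ncard
      = (InvSet (z * sperm i) \ {(i, i + 1)}).ncard + 1 :=
        (Set.ncard_diff_singleton_add_one hp0T hT).symm
    _ = (smap i '' (InvSet z \ {(i, i + 1)})).ncard + 1 := by rw [invSet_mul_diff]
    _ = (InvSet z \ {(i, i + 1)}).ncard + 1 := by rw [Set.ncard_image_of_injOn (smap_injOn z i)]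
    _ = (InvSet z).ncard + 1 := by rw [Set.diff_singleton_eq_self hp0S]

lemma invLength_mul_of_gt {z : Equiv.Perm ℕ} (hz : (InvSet z).Finite) {i : ℕ}
    (h : z (i + 1) < z i) : invLength (z * sperm i) + 1 = invLength z := by
  have hp0S : (i, i + 1) ∈ InvSet z := ⟨by omega, h⟩
  have hp0T : (i, i + 1) ∉ InvSet (z * sperm i) := by
    rintro ⟨-, hc⟩
    simp only [Equiv.Perm.mul_apply] at hc
    rw [sperm_succ, sperm_self] at hc
    omega
  rw [invLength_def, invLength_def]
  calc (InvSet (z * sperm i)).ncard + 1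
      = (InvSet (z * sperm i) \ {(i, i + 1)}).ncard + 1 := by
        rw [Set.diff_singleton_eq_self hp0T]
    _ = (smap i '' (InvSet z \ {(i, i + 1)})).ncard + 1 := by rw [invSet_mul_diff]
    _ = (InvSet z \ {(i, i + 1)}).ncard + 1 := by rw [Set.ncard_image_of_injOn (smap_injOn z i)]
    _ = (InvSet z).ncard := Set.ncard_diff_singleton_add_one hp0S hz

/- word-level -/
def piw (w : List ℕ) : Equiv.Perm ℕ := (w.map sperm).prod

lemma Reduced_iff (w : List ℕ) : Reduced w ↔ invLength (piw w) = w.length := Iff.rfl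

lemma piw_nil : piw [] = 1 := rfl

lemma piw_append (u v : List ℕ) : piw (u ++ v) = piw u * piw v := by
  simp [piw]

lemma piw_cons (i : ℕ) (w : List ℕ) : piw (i :: w) = sperm i * piw w := by
  simp [piw]

lemma piw_concat (w : List ℕ) (i : ℕ) : piw (w ++ [i]) = piw w * sperm i := by
  simp [piw]

lemma piw_concat2 (w : List ℕ) (a b : ℕ) :
    piw (w ++ [a, b]) = piw w * sperm a * sperm b := by
  simp [piw, mul_assoc]

lemma piw_finite (w : List ℕ) : (InvSet (piw w)).Finite := by
  induction w using List.reverseRecOn with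
  | nil => rw [piw_nil, InvSet_one]; exact Set.finite_empty
  | append_singleton w i ih => rw [piw_concat]; exact invSet_mul_finite ih i

lemma invLength_mul_le {z : Equiv.Perm ℕ} (hz : (InvSet z).Finite) (i : ℕ) :
    invLength (z * sperm i) ≤ invLength z + 1 := by
  have hne : z i ≠ z (i + 1) := z.injective.ne (by omega)
  rcases hne.lt_or_gt with h | h
  · rw [invLength_mul_of_lt hz h]
  · have := invLength_mul_of_gt hz h; omega

lemma invLength_piw_le (w : List ℕ) : invLength (piw w) ≤ w.length := by
  induction w using List.reverseRecOn with
  | nil => rw [piw_nil, invLength_one]; simp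
  | append_singleton w i ih =>
    rw [piw_concat]
    have := invLength_mul_le (piw_finite w) i
    simp only [List.length_append, List.length_singleton]
    omega

lemma piw_zero {w : List ℕ} (hw : PosWord w) : piw w 0 = 0 := by
  induction w with
  | nil => rfl
  | cons i w ih =>
    have hi : 0 < i := hw i (by simp)
    have hw' : PosWord w := fun x hx => hw x (by simp [hx])
    rw [piw_cons, Equiv.Perm.mul_apply, ih hw', sperm_apply_ne (by omega) (by omega)]

lemma perm_id_of_strictMono (z : Equiv.Perm ℕ) (h : StrictMono (z : ℕ → ℕ)) : z = 1 := by
  have le_apply : ∀ (f : ℕ → ℕ), StrictMono f → ∀ x, x ≤ f x := by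
    intro f hf x
    induction x with
    | zero => exact Nat.zero_le _
    | succ n ih => exact Nat.succ_le_of_lt (lt_of_le_of_lt ih (hf (Nat.lt_succ_self n)))
  have hinv : StrictMono (⇑z.symm : ℕ → ℕ) := by
    intro a b hab
    by_contra hc
    push_neg at hc
    have := h.le_iff_le.mpr hc
    rw [Equiv.apply_symm_apply, Equiv.apply_symm_apply] at this
    omega
  ext x
  have h1 := le_apply _ h x
  have h2 := le_apply _ hinv (z x)
  rw [Equiv.symm_apply_apply] at h2
  simp only [Equiv.Perm.one_apply]
  omega

lemma perm_eq_one {z : Equiv.Perm ℕ} (hz : (InvSet z).Finite) (h : invLength z = 0) : z = 1 := by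
  rw [invLength_def, Set.ncard_eq_zero hz] at h
  apply perm_id_of_strictMono
  intro a b hab
  have hmem : (a, b) ∉ InvSet z := by rw [h]; exact Set.notMem_empty _
  simp only [InvSet, Set.mem_setOf_eq, not_and, not_lt] at hmem
  exact lt_of_le_of_ne (hmem hab) (z.injective.ne hab.ne)

lemma exists_descent {z : Equiv.Perm ℕ} (hz : z ≠ 1) : ∃ i, z (i + 1) < z i := by
  by_contra hc
  push_neg at hc
  apply hz
  apply perm_id_of_strictMono
  apply strictMono_nat_of_lt_succ
  intro n
  exact lt_of_le_of_ne (hc n) (z.injective.ne (by omega))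

lemma exists_pos_word : ∀ (n : ℕ) (z : Equiv.Perm ℕ), z 0 = 0 → (InvSet z).Finite →
    invLength z = n → ∃ r : List ℕ, PosWord r ∧ r.length = n ∧ piw r = z := by
  intro n
  induction n with
  | zero =>
    intro z h0 hfin hl
    exact ⟨[], fun x hx => by simp at hx, rfl, by rw [piw_nil, perm_eq_one hfin hl]⟩
  | succ n ih =>
    intro z h0 hfin hl
    have hz1 : z ≠ 1 := by rintro rfl; rw [invLength_one] at hl; omega
    obtain ⟨i, hi⟩ := exists_descent hz1
    have hipos : 0 < i := by
      rcases Nat.eq_zero_or_pos i with h | h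
      · subst h; rw [h0] at hi; omega
      · exact h
    have hstep := invLength_mul_of_gt hfin hi
    obtain ⟨r, hr1, hr2, hr3⟩ := ih (z * sperm i)
      (by rw [Equiv.Perm.mul_apply, sperm_apply_ne (by omega) (by omega), h0])
      (invSet_mul_finite hfin i) (by omega)
    refine ⟨r ++ [i], ?_, by simp [hr2], ?_⟩
    · intro x hx
      rcases List.mem_append.mp hx with h | h
      · exact hr1 x h
      · simp at h; omega
    · rw [piw_concat, hr3, mul_sperm_cancel]

/-- The braid congruence on words of positive integers: the strongest
congruence with `ij = ji` for `|i−j| > 1` and `i(i+1)i = (i+1)i(i+1)`. -/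
inductive BrCong : List ℕ → List ℕ → Prop
  | refl (w : List ℕ) : BrCong w w
  | symm {v w : List ℕ} : BrCong v w → BrCong w v
  | trans {u v w : List ℕ} : BrCong u v → BrCong v w → BrCong u w
  | comm (x y : List ℕ) {i j : ℕ} (hi : 0 < i) (hj : 0 < j)
      (hij : i + 1 < j ∨ j + 1 < i) :
      BrCong (x ++ [i, j] ++ y) (x ++ [j, i] ++ y)
  | braid (x y : List ℕ) {i : ℕ} (hi : 0 < i) :
      BrCong (x ++ [i, i + 1, i] ++ y) (x ++ [i + 1, i, i + 1] ++ y)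

lemma BrCong.length_eq {v w : List ℕ} (h : BrCong v w) : v.length = w.length := by
  induction h <;> simp_all

lemma BrCong.piw_eq {v w : List ℕ} (h : BrCong v w) : piw v = piw w := by
  induction h with
  | refl => rfl
  | symm _ ih => exact ih.symm
  | trans _ _ ih1 ih2 => exact ih1.trans ih2
  | @comm x y i j hi hj hij =>
    simp only [piw_append]
    have : piw [i, j] = piw [j, i] := by
      simp only [piw, List.map_cons, List.map_nil, List.prod_cons, List.prod_nil, mul_one]
      exact sperm_comm hij
    rw [this]
  | @braid x y i hi =>
    simp only [piw_append]
    have : piw [i, i+1, i] = piw [i+1, i, i+1] := by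
      simp only [piw, List.map_cons, List.map_nil, List.prod_cons, List.prod_nil, mul_one]
      exact sperm_braid _
    rw [this]

lemma BrCong.append_right {u v : List ℕ} (h : BrCong u v) (t : List ℕ) :
    BrCong (u ++ t) (v ++ t) := by
  induction h with
  | refl => exact .refl _
  | symm _ ih => exact ih.symm
  | trans _ _ ih1 ih2 => exact ih1.trans ih2
  | comm x y hi hj hij => simpa [List.append_assoc] using BrCong.comm x (y ++ t) hi hj hij
  | braid x y hi => simpa [List.append_assoc] using BrCong.braid x (y ++ t) hi

lemma concat_reduced {w₁ : List ℕ} {i n : ℕ}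
    (hl : w₁.length = n) (hred : invLength (piw (w₁ ++ [i])) = n + 1) :
    invLength (piw w₁) = n ∧ piw w₁ i < piw w₁ (i + 1) := by
  have hfin := piw_finite w₁
  have hle := invLength_piw_le w₁
  rw [hl] at hle
  rw [piw_concat] at hred
  have hne : piw w₁ i ≠ piw w₁ (i + 1) := (piw w₁).injective.ne (by omega)
  rcases hne.lt_or_gt with hlt | hgt
  · have := invLength_mul_of_lt hfin hlt
    exact ⟨by omega, hlt⟩
  · have := invLength_mul_of_gt hfin hgt
    omega

lemma braid_case (n : ℕ)
    (ih : ∀ w w' : List ℕ, PosWord w → PosWord w' → w.length = n → w'.length = n →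
      piw w = piw w' → Reduced w → BrCong w w')
    {w₁ w₂ : List ℕ} {i : ℕ} (h₁ : PosWord w₁) (h₂ : PosWord w₂) (hi : 0 < i)
    (hl₁ : w₁.length = n) (hl₂ : w₂.length = n)
    (hpi : piw (w₁ ++ [i]) = piw (w₂ ++ [i + 1]))
    (hred : invLength (piw (w₁ ++ [i])) = n + 1) :
    BrCong (w₁ ++ [i]) (w₂ ++ [i + 1]) := by
  obtain ⟨hru₁, hd₁⟩ := concat_reduced hl₁ hred
  obtain ⟨hru₂, hd₂⟩ := concat_reduced hl₂ (by rw [← hpi]; exact hred)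
  have hfin₁ := piw_finite w₁
  have hv₂ : piw w₂ = piw w₁ * sperm i * sperm (i + 1) := by
    have h := hpi
    rw [piw_concat, piw_concat] at h
    rw [h, mul_sperm_cancel]
  have hd₂' : piw w₁ (i + 2) < piw w₁ i := by
    have a1 : sperm i (sperm (i + 1) (i + 1)) = i + 2 := by
      simp only [sperm_apply]; split_ifs <;> omega
    have a2 : sperm i (sperm (i + 1) (i + 1 + 1)) = i := by
      simp only [sperm_apply]; split_ifs <;> omega
    rw [hv₂] at hd₂
    simp only [Equiv.Perm.mul_apply] at hd₂
    rw [a1, a2] at hd₂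
    exact hd₂
  have hd₃ : piw w₁ (i + 1 + 1) < piw w₁ (i + 1) := by
    rw [show i + 1 + 1 = i + 2 by omega]
    exact lt_trans hd₂' hd₁
  have hs1 := invLength_mul_of_gt hfin₁ hd₃
  have hz2fin := invSet_mul_finite hfin₁ (i + 1)
  have hd₄ : (piw w₁ * sperm (i + 1)) (i + 1) < (piw w₁ * sperm (i + 1)) i := by
    have b1 : sperm (i + 1) (i + 1) = i + 2 := by
      simp only [sperm_apply]; split_ifs <;> omega
    have b2 : sperm (i + 1) i = i := by
      simp only [sperm_apply]; split_ifs <;> omega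
    simp only [Equiv.Perm.mul_apply]
    rw [b1, b2]
    exact hd₂'
  have hs2 := invLength_mul_of_gt hz2fin hd₄
  have hmn : invLength (piw w₁ * sperm (i + 1) * sperm i) + 2 = n := by omega
  have hz₃0 : (piw w₁ * sperm (i + 1) * sperm i) 0 = 0 := by
    simp only [Equiv.Perm.mul_apply]
    rw [sperm_apply_ne (show (0:ℕ) ≠ i by omega) (show (0:ℕ) ≠ i + 1 by omega),
      sperm_apply_ne (show (0:ℕ) ≠ i + 1 by omega) (show (0:ℕ) ≠ i + 1 + 1 by omega),
      piw_zero h₁]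
  have hz₃fin : (InvSet (piw w₁ * sperm (i + 1) * sperm i)).Finite := invSet_mul_finite hz2fin i
  obtain ⟨r, hrp, hrl, hr3⟩ := exists_pos_word _ _ hz₃0 hz₃fin rfl
  have hA : piw (r ++ [i, i + 1]) = piw w₁ := by
    rw [piw_concat2, hr3]
    simp only [mul_assoc]
    rw [cancel4, mul_one]
  have hB : piw (r ++ [i + 1, i]) = piw w₂ := by
    rw [piw_concat2, hr3, hv₂]
    simp only [mul_assoc]
    rw [pure_braid4]
  have posA : PosWord (r ++ [i, i + 1]) := by
    intro x hx
    rcases List.mem_append.mp hx with h | h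
    · exact hrp x h
    · simp at h; omega
  have posB : PosWord (r ++ [i + 1, i]) := by
    intro x hx
    rcases List.mem_append.mp hx with h | h
    · exact hrp x h
    · simp at h; omega
  have lenA : (r ++ [i, i + 1]).length = n := by simp only [List.length_append]; simp; omega
  have lenB : (r ++ [i + 1, i]).length = n := by simp only [List.length_append]; simp; omega
  have c1 : BrCong w₁ (r ++ [i, i + 1]) :=
    ih w₁ _ h₁ posA hl₁ lenA hA.symm (Reduced_iff _ |>.mpr (hru₁.trans hl₁.symm))
  have c2 : BrCong w₂ (r ++ [i + 1, i]) :=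
    ih w₂ _ h₂ posB hl₂ lenB hB.symm (Reduced_iff _ |>.mpr (hru₂.trans hl₂.symm))
  have d1 := c1.append_right [i]
  have d2 := (c2.append_right [i + 1]).symm
  have e1 : (r ++ [i, i + 1]) ++ [i] = r ++ [i, i + 1, i] ++ [] := by simp
  have e2 : (r ++ [i + 1, i]) ++ [i + 1] = r ++ [i + 1, i, i + 1] ++ [] := by simp
  rw [e1] at d1
  rw [e2] at d2
  exact d1.trans ((BrCong.braid r [] hi).trans d2)

lemma matsumoto : ∀ (n : ℕ) (w w' : List ℕ), PosWord w → PosWord w' → w.length = n →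
    w'.length = n → piw w = piw w' → Reduced w → BrCong w w' := by
  intro n
  induction n with
  | zero =>
    intro w w' _ _ hl hl' _ _
    rw [List.length_eq_zero_iff] at hl hl'
    subst hl; subst hl'
    exact .refl _
  | succ n ih =>
    intro w w' hw hw' hl hl' hpi hred
    obtain ⟨w₁, i, rfl⟩ : ∃ w₁ i, w = w₁ ++ [i] := by
      rcases w.eq_nil_or_concat' with rfl | ⟨w₁, i, rfl⟩
      · simp at hl
      · exact ⟨w₁, i, rfl⟩
    obtain ⟨w₂, j, rfl⟩ : ∃ w₂ j, w' = w₂ ++ [j] := by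
      rcases w'.eq_nil_or_concat' with rfl | ⟨w₂, j, rfl⟩
      · simp at hl'
      · exact ⟨w₂, j, rfl⟩
    have hw₁ : PosWord w₁ := fun x hx => hw x (by simp [hx])
    have hw₂ : PosWord w₂ := fun x hx => hw' x (by simp [hx])
    have hi : 0 < i := hw i (by simp)
    have hj : 0 < j := hw' j (by simp)
    have hl₁ : w₁.length = n := by simp at hl; omega
    have hl₂ : w₂.length = n := by simp at hl'; omega
    have hredL : invLength (piw (w₁ ++ [i])) = n + 1 := by
      rw [Reduced_iff] at hred
      simpa [hl₁] using hred
    by_cases hij : i = j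
    · subst hij
      obtain ⟨hru₁, -⟩ := concat_reduced hl₁ hredL
      have hmid : piw w₁ = piw w₂ := by
        have h := hpi
        rw [piw_concat, piw_concat] at h
        exact mul_right_cancel h
      exact (ih w₁ w₂ hw₁ hw₂ hl₁ hl₂ hmid
        ((Reduced_iff _).mpr (hru₁.trans hl₁.symm))).append_right [i]
    · rcases (show (i + 1 < j ∨ j + 1 < i) ∨ j = i + 1 ∨ i = j + 1 by omega)
        with hcomm | hbr | hbr
      · obtain ⟨hru₁, hd₁⟩ := concat_reduced hl₁ hredL
        obtain ⟨hru₂, hd₂⟩ := concat_reduced hl₂ (by rw [← hpi]; exact hredL)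
        have hfin₂ := piw_finite w₂
        have hv₂ : piw w₂ = piw w₁ * sperm i * sperm j := by
          have h := hpi
          rw [piw_concat, piw_concat] at h
          rw [h, mul_sperm_cancel]
        have hdv₂ : piw w₂ (i + 1) < piw w₂ i := by
          have a1 : sperm i (sperm j (i + 1)) = i := by
            simp only [sperm_apply]; split_ifs <;> omega
          have a2 : sperm i (sperm j i) = i + 1 := by
            simp only [sperm_apply]; split_ifs <;> omega
          rw [hv₂]
          simp only [Equiv.Perm.mul_apply]
          rw [a1, a2]
          exact hd₁
        have hs1 := invLength_mul_of_gt hfin₂ hdv₂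
        have hz0 : (piw w₂ * sperm i) 0 = 0 := by
          simp only [Equiv.Perm.mul_apply]
          rw [sperm_apply_ne (show (0:ℕ) ≠ i by omega) (show (0:ℕ) ≠ i + 1 by omega),
            piw_zero hw₂]
        have hzfin := invSet_mul_finite hfin₂ i
        obtain ⟨r, hrp, hrl, hr3⟩ := exists_pos_word _ _ hz0 hzfin rfl
        have hA : piw (r ++ [i]) = piw w₂ := by rw [piw_concat, hr3, mul_sperm_cancel]
        have hB : piw (r ++ [j]) = piw w₁ := by
          rw [piw_concat, hr3, hv₂]
          simp only [mul_assoc]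
          rw [comm4 hcomm, mul_one]
        have posA : PosWord (r ++ [i]) := by
          intro x hx
          rcases List.mem_append.mp hx with h | h
          · exact hrp x h
          · simp at h; omega
        have posB : PosWord (r ++ [j]) := by
          intro x hx
          rcases List.mem_append.mp hx with h | h
          · exact hrp x h
          · simp at h; omega
        have lenA : (r ++ [i]).length = n := by simp [hrl]; omega
        have lenB : (r ++ [j]).length = n := by simp [hrl]; omega
        have c2 : BrCong w₂ (r ++ [i]) :=
          ih w₂ _ hw₂ posA hl₂ lenA hA.symm ((Reduced_iff _).mpr (hru₂.trans hl₂.symm))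
        have c1 : BrCong w₁ (r ++ [j]) :=
          ih w₁ _ hw₁ posB hl₁ lenB hB.symm ((Reduced_iff _).mpr (hru₁.trans hl₁.symm))
        have d1 := c1.append_right [i]
        have d2 := (c2.append_right [j]).symm
        have e1 : (r ++ [j]) ++ [i] = r ++ [j, i] ++ [] := by simp
        have e2 : (r ++ [i]) ++ [j] = r ++ [i, j] ++ [] := by simp
        rw [e1] at d1
        rw [e2] at d2
        exact d1.trans ((BrCong.comm r [] hj hi hcomm.symm).trans d2)
      · subst hbr
        exact braid_case n ih hw₁ hw₂ hi hl₁ hl₂ hpi hredL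
      · subst hbr
        exact (braid_case n ih hw₂ hw₁ hj hl₂ hl₁ hpi.symm (by rw [← hpi]; exact hredL)).symm

lemma not_reduced_braid (w : List ℕ) : PosWord w → ¬ Reduced w →
    ∃ x y : List ℕ, ∃ a : ℕ, BrCong w (x ++ a :: a :: y) := by
  induction w using List.reverseRecOn with
  | nil =>
    intro _ hnr
    exact absurd ((Reduced_iff []).mpr (by rw [piw_nil, invLength_one]; rfl)) hnr
  | append_singleton w' i ihw =>
    intro hw hnr
    have hw' : PosWord w' := fun x hx => hw x (by simp [hx])
    have hi : 0 < i := hw i (by simp)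
    by_cases hr : Reduced w'
    · rw [Reduced_iff] at hr
      have hfin := piw_finite w'
      have hne : piw w' i ≠ piw w' (i + 1) := (piw w').injective.ne (by omega)
      rcases hne.lt_or_gt with hlt | hgt
      · exfalso
        apply hnr
        rw [Reduced_iff, piw_concat, invLength_mul_of_lt hfin hlt]
        simp [hr]
      · have hs := invLength_mul_of_gt hfin hgt
        have hz0 : (piw w' * sperm i) 0 = 0 := by
          simp only [Equiv.Perm.mul_apply]
          rw [sperm_apply_ne (show (0:ℕ) ≠ i by omega) (show (0:ℕ) ≠ i + 1 by omega),
            piw_zero hw']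
        obtain ⟨r, hrp, hrl, hr3⟩ := exists_pos_word _ _ hz0 (invSet_mul_finite hfin i) rfl
        have hA : piw (r ++ [i]) = piw w' := by rw [piw_concat, hr3, mul_sperm_cancel]
        have posA : PosWord (r ++ [i]) := by
          intro x hx
          rcases List.mem_append.mp hx with h | h
          · exact hrp x h
          · simp at h; omega
        have lenA : (r ++ [i]).length = w'.length := by simp [hrl]; omega
        have c : BrCong w' (r ++ [i]) :=
          matsumoto w'.length w' (r ++ [i]) hw' posA rfl lenA hA.symm ((Reduced_iff _).mpr hr)
        refine ⟨r, [], i, ?_⟩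
        have := c.append_right [i]
        rwa [show (r ++ [i]) ++ [i] = r ++ i :: i :: [] by simp] at this
    · obtain ⟨x, y, a, hbr⟩ := ihw hw' hr
      refine ⟨x, y ++ [i], a, ?_⟩
      have := hbr.append_right [i]
      rwa [show (x ++ a :: a :: y) ++ [i] = x ++ a :: a :: (y ++ [i]) by simp] at this

/-- a word is reduced iff its braid-congruence class contains
no word with two equal adjacent letters. -/
theorem reduced_iff_no_adjacent_equal (w : List ℕ) (hw : PosWord w) :
    Reduced w ↔
      ∀ v : List ℕ, BrCong w v → ¬ ∃ (x y : List ℕ) (a : ℕ), v = x ++ a :: a :: y := by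
  constructor
  · intro hred v hbr
    rintro ⟨x, y, a, rfl⟩
    have hlen := hbr.length_eq
    have hpi := hbr.piw_eq
    have hshort : piw (x ++ a :: a :: y) = piw x * piw y := by
      have h1 : piw (x ++ a :: a :: y) = piw x * (sperm a * (sperm a * piw y)) := by
        simp [piw, mul_assoc]
      rw [h1, show sperm a * (sperm a * piw y) = piw y by rw [← mul_assoc, sperm_mul_self, one_mul]]
    have hle : invLength (piw x * piw y) ≤ x.length + y.length := by
      have := invLength_piw_le (x ++ y)
      rw [piw_append] at this
      simpa using this
    rw [Reduced_iff, hpi, hshort] at hred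
    simp only [List.length_append, List.length_cons] at hred hlen
    omega
  · intro h
    by_contra hnr
    obtain ⟨x, y, a, hbr⟩ := not_reduced_braid w hw hnr
    exact h _ hbr ⟨x, y, a, rfl⟩
end

section
/- Fix an even n and let z_max be the fixed-point-free involution with z_max(i) = n+1−i for i ≤ n and z_max(i) = i − (−1)^i for i > n. Let T be the increasing shifted tableau whose r-th row (r = 1, …, n/2 − 1) is (2r)(2r+1)⋯(n−1). Then the row reading word of T is an FPF-involution word for z_max; moreover every FPF-involution word for z_max has length (n−2) + (n−4) + ⋯ + 2 and all letters at most n−1. -/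
/-- The underlying function of the involution `Θ = (1,2)(3,4)(5,6)⋯`
(fixing `0`, which plays no role). -/
def thetaFun (n : ℕ) : ℕ := if n % 2 = 1 then n + 1 else n - 1

lemma thetaFun_involutive : Function.Involutive thetaFun := by
  intro n
  by_cases h : n % 2 = 1
  · have h2 : ¬ (n + 1) % 2 = 1 := by omega
    simp only [thetaFun]
    split_ifs <;> omega
  · rcases Nat.eq_zero_or_pos n with h0 | h0
    · subst h0; decide
    · have h1 : (n - 1) % 2 = 1 := by omega
      simp only [thetaFun]
      split_ifs <;> omega

/-- The permutation `Θ` with `Θ(n) = n − (−1)^n` for `n ≥ 1`. -/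
def Theta : Equiv.Perm ℕ := thetaFun_involutive.toPerm

/-- `fpfConj w = s_{i_l} ⋯ s_{i_1} Θ s_{i_1} ⋯ s_{i_l}` for `w = i_1 ⋯ i_l`. -/
def fpfConj (w : List ℕ) : Equiv.Perm ℕ :=
  (w.reverse.map sperm).prod * Theta * (w.map sperm).prod

/-- The row reading word of the increasing shifted tableau whose `r`-th row
(for `r = 1, …, n/2 − 1`) is `(2r)(2r+1)⋯(n−1)`: rows are read from the last
row to the first. -/
def zmaxWord (n : ℕ) : List ℕ :=
  ((List.range' 1 (n / 2 - 1)).reverse).flatMap fun r => List.range' (2 * r) (n - 2 * r)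


theorem Equiv.Perm.apply_inv_self {α : Type*} (f : Equiv.Perm α) (x : α) : f (f⁻¹ x) = x :=
  f.apply_symm_apply x

theorem Equiv.Perm.inv_apply_self {α : Type*} (f : Equiv.Perm α) (x : α) : f⁻¹ (f x) = x :=
  f.symm_apply_apply x

namespace ZX

lemma theta_apply (x : ℕ) : Theta x = thetaFun x := rfl

lemma sperm_apply (a x : ℕ) : sperm a x = if x = a then a+1 else if x = a+1 then a else x := by
  simp [sperm, Equiv.swap_apply_def]

lemma sperm_sperm (a x : ℕ) : sperm a (sperm a x) = x := by
  rw [sperm_apply, sperm_apply]; split_ifs <;> first | omega | simp_all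

lemma sperm_mul_self (a : ℕ) : sperm a * sperm a = 1 := by
  ext x; simpa using sperm_sperm a x

lemma sperm_inv (a : ℕ) : (sperm a)⁻¹ = sperm a := by
  simp [sperm]

def wprod (v : List ℕ) : Equiv.Perm ℕ := (v.map sperm).prod

lemma wprod_nil : wprod [] = 1 := rfl
lemma wprod_cons (a : ℕ) (v : List ℕ) : wprod (a :: v) = sperm a * wprod v := by
  simp [wprod]
lemma wprod_append (u v : List ℕ) : wprod (u ++ v) = wprod u * wprod v := by
  simp [wprod]

lemma wprod_inv (v : List ℕ) : (wprod v)⁻¹ = wprod v.reverse := by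
  unfold wprod
  rw [List.prod_inv_reverse, List.map_reverse]
  congr 1
  simp [List.map_map, Function.comp_def, sperm_inv]

lemma fpfConj_eq (v : List ℕ) : fpfConj v = (wprod v)⁻¹ * Theta * wprod v := by
  rw [wprod_inv]
  rfl

lemma fpfConj_concat (v : List ℕ) (a : ℕ) :
    fpfConj (v ++ [a]) = sperm a * fpfConj v * sperm a := by
  rw [fpfConj_eq, fpfConj_eq, wprod_append]
  have h1 : wprod [a] = sperm a := by simp [wprod]
  rw [h1, mul_inv_rev, sperm_inv]
  try group

lemma fpfConj_nil : fpfConj [] = Theta := by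
  rw [fpfConj_eq, wprod_nil]; group

lemma theta_zero : Theta 0 = 0 := rfl

lemma theta_ne_self (t : ℕ) (ht : 1 ≤ t) : Theta t ≠ t := by
  rw [theta_apply, thetaFun]; split_ifs <;> omega

lemma theta_high (n j : ℕ) (hn : n % 2 = 0) (hj : n < j) : n + 1 ≤ Theta j := by
  rw [theta_apply, thetaFun]; split_ifs with h <;> omega

lemma wprod_zero (v : List ℕ) (hv : PosWord v) : wprod v 0 = 0 := by
  induction v with
  | nil => rfl
  | cons a v ih =>
    rw [wprod_cons]
    have ha : 0 < a := hv a (by simp)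
    have h2 : wprod v 0 = 0 := ih (fun x hx => hv x (by simp [hx]))
    rw [Equiv.Perm.mul_apply, h2, sperm_apply]
    split_ifs <;> first | omega | simp_all

lemma wprod_le (v : List ℕ) (N : ℕ) (hv : ∀ x ∈ v, x + 1 ≤ N) :
    ∀ x, x ≤ N → wprod v x ≤ N := by
  induction v with
  | nil => intro x hx; simpa [wprod_nil] using hx
  | cons a v ih =>
    intro x hx
    rw [wprod_cons]
    have ha : a + 1 ≤ N := hv a (by simp)
    have h2 : wprod v x ≤ N := ih (fun y hy => hv y (by simp [hy])) x hx
    rw [Equiv.Perm.mul_apply, sperm_apply]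
    split_ifs <;> omega

lemma wprod_inv_le (v : List ℕ) (N : ℕ) (hv : ∀ x ∈ v, x + 1 ≤ N) :
    ∀ x, x ≤ N → (wprod v)⁻¹ x ≤ N := by
  rw [wprod_inv]
  exact wprod_le v.reverse N (fun x hx => hv x (List.mem_reverse.mp hx))

lemma theta_le (N : ℕ) (hN : N % 2 = 0) : ∀ x, x ≤ N → Theta x ≤ N := by
  intro x hx; rw [theta_apply, thetaFun]; split_ifs with h <;> omega

lemma fpfConj_le (v : List ℕ) (N : ℕ) (hN : N % 2 = 0) (hv : ∀ x ∈ v, x + 1 ≤ N) :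
    ∀ x, x ≤ N → fpfConj v x ≤ N := by
  intro x hx
  rw [fpfConj_eq]
  simp only [Equiv.Perm.mul_apply]
  exact wprod_inv_le v N hv _ (theta_le N hN _ (wprod_le v N hv x hx))

lemma fpfConj_involutive (v : List ℕ) : Function.Involutive (fpfConj v) := by
  intro x
  rw [fpfConj_eq]
  simp only [Equiv.Perm.mul_apply]
  rw [Equiv.Perm.apply_inv_self]
  rw [show ∀ t, Theta (Theta t) = t from thetaFun_involutive]
  rw [Equiv.Perm.inv_apply_self]

lemma fpfConj_zero (v : List ℕ) (hv : PosWord v) : fpfConj v 0 = 0 := by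
  rw [fpfConj_eq]
  simp only [Equiv.Perm.mul_apply]
  rw [wprod_zero v hv, theta_zero]
  have := wprod_zero v hv
  calc (wprod v)⁻¹ 0 = (wprod v)⁻¹ (wprod v 0) := by rw [this]
  _ = 0 := Equiv.Perm.inv_apply_self _ _

lemma fpfConj_fpf (v : List ℕ) (hv : PosWord v) (i : ℕ) (hi : 1 ≤ i) : fpfConj v i ≠ i := by
  rw [fpfConj_eq]
  simp only [Equiv.Perm.mul_apply]
  intro h
  have h2 : Theta (wprod v i) = wprod v i := by
    have := congrArg (wprod v) h
    rwa [Equiv.Perm.apply_inv_self] at this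
  have h3 : wprod v i ≠ 0 := by
    intro h0
    have : wprod v i = wprod v 0 := by rw [h0, wprod_zero v hv]
    have := (wprod v).injective this
    omega
  exact theta_ne_self _ (by omega) h2


open Finset in
noncomputable def inva (N : ℕ) (w : Equiv.Perm ℕ) : ℕ :=
  (((Finset.range (N+1)) ×ˢ (Finset.range (N+1))).filter
    fun p => p.1 < p.2 ∧ w p.2 < w p.1).card

lemma sperm_le (a N : ℕ) (ha : a + 1 ≤ N) : ∀ x, x ≤ N → sperm a x ≤ N := by
  intro x hx; rw [sperm_apply]; split_ifs <;> omega

lemma sperm_lt_iff (a x y : ℕ) (hxy : x ≠ y) :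
    (sperm a x < sperm a y ↔ ((x < y ∧ ¬(x = a ∧ y = a+1)) ∨ (x = a+1 ∧ y = a))) := by
  rw [sperm_apply, sperm_apply]
  split_ifs <;> omega

lemma inva_mul_right {N a : ℕ} (w : Equiv.Perm ℕ) (ha : a + 1 ≤ N) (h : w a < w (a+1)) :
    inva N (w * sperm a) = inva N w + 1 := by
  classical
  unfold inva
  have hbij :
      (((Finset.range (N+1)) ×ˢ (Finset.range (N+1))).filter
        fun p => p.1 < p.2 ∧ (w * sperm a) p.2 < (w * sperm a) p.1).card
      = (((Finset.range (N+1)) ×ˢ (Finset.range (N+1))).filter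
        fun p => sperm a p.1 < sperm a p.2 ∧ w p.2 < w p.1).card := by
    apply Finset.card_bij' (fun p _ => (sperm a p.1, sperm a p.2))
      (fun p _ => (sperm a p.1, sperm a p.2))
    · intro p hp
      simp only [Finset.mem_filter, Finset.mem_product, Finset.mem_range] at hp ⊢
      obtain ⟨⟨h1, h2⟩, h3, h4⟩ := hp
      refine ⟨⟨?_, ?_⟩, ?_, ?_⟩
      · have := sperm_le a N ha p.1 (by omega); omega
      · have := sperm_le a N ha p.2 (by omega); omega
      · rw [sperm_sperm, sperm_sperm]; exact h3
      · simpa [Equiv.Perm.mul_apply] using h4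
    · intro p hp
      simp only [Finset.mem_filter, Finset.mem_product, Finset.mem_range] at hp ⊢
      obtain ⟨⟨h1, h2⟩, h3, h4⟩ := hp
      refine ⟨⟨?_, ?_⟩, ?_, ?_⟩
      · have := sperm_le a N ha p.1 (by omega); omega
      · have := sperm_le a N ha p.2 (by omega); omega
      · exact h3
      · simpa [Equiv.Perm.mul_apply, sperm_sperm] using h4
    · intro p hp; simp [sperm_sperm]
    · intro p hp; simp [sperm_sperm]
  rw [hbij]
  have hset :
      (((Finset.range (N+1)) ×ˢ (Finset.range (N+1))).filter
        fun p => sperm a p.1 < sperm a p.2 ∧ w p.2 < w p.1)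
      = insert (a+1, a) (((Finset.range (N+1)) ×ˢ (Finset.range (N+1))).filter
        fun p => p.1 < p.2 ∧ w p.2 < w p.1) := by
    ext p
    simp only [Finset.mem_insert, Finset.mem_filter, Finset.mem_product, Finset.mem_range]
    constructor
    · rintro ⟨⟨h1, h2⟩, h3, h4⟩
      have hne : p.1 ≠ p.2 := by
        intro he; rw [he] at h3; omega
      rw [sperm_lt_iff a _ _ hne] at h3
      rcases h3 with ⟨h5, h6⟩ | ⟨h5, h6⟩
      · right; exact ⟨⟨h1, h2⟩, h5, h4⟩
      · left
        have : p = (p.1, p.2) := rfl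
        rw [this, h5, h6]
    · rintro (he | ⟨⟨h1, h2⟩, h3, h4⟩)
      · rw [he]
        refine ⟨⟨by omega, by omega⟩, ?_, by simpa using h⟩
        rw [sperm_apply, sperm_apply]
        split_ifs <;> omega
      · have hne : p.1 ≠ p.2 := by omega
        refine ⟨⟨h1, h2⟩, ?_, h4⟩
        rw [sperm_lt_iff a _ _ hne]
        left
        constructor
        · exact h3
        · rintro ⟨ha1, ha2⟩
          rw [ha1, ha2] at h4
          omega
  rw [hset, Finset.card_insert_of_notMem]
  simp only [Finset.mem_filter, Finset.mem_product, Finset.mem_range]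
  rintro ⟨-, h3, -⟩
  omega

lemma inva_mul_right' {N a : ℕ} (w : Equiv.Perm ℕ) (ha : a + 1 ≤ N) (h : w (a+1) < w a) :
    inva N w = inva N (w * sperm a) + 1 := by
  have h1 : (w * sperm a) a < (w * sperm a) (a+1) := by
    simp only [Equiv.Perm.mul_apply]
    rw [sperm_apply, sperm_apply]
    split_ifs <;> first | omega | assumption | (exfalso; omega)
  have := inva_mul_right (w * sperm a) ha h1
  rwa [mul_assoc, sperm_mul_self, mul_one] at this

lemma inva_mul_left {N a : ℕ} (u : Equiv.Perm ℕ) (pa pb : ℕ) (hpa : u pa = a)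
    (hpb : u pb = a+1) (hpaN : pa ≤ N) (hpbN : pb ≤ N) (hlt : pa < pb) :
    inva N (sperm a * u) = inva N u + 1 := by
  classical
  unfold inva
  have hset :
      (((Finset.range (N+1)) ×ˢ (Finset.range (N+1))).filter
        fun p => p.1 < p.2 ∧ (sperm a * u) p.2 < (sperm a * u) p.1)
      = insert (pa, pb) (((Finset.range (N+1)) ×ˢ (Finset.range (N+1))).filter
        fun p => p.1 < p.2 ∧ u p.2 < u p.1) := by
    ext p
    simp only [Finset.mem_insert, Finset.mem_filter, Finset.mem_product, Finset.mem_range]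
    simp only [Equiv.Perm.mul_apply]
    constructor
    · rintro ⟨⟨h1, h2⟩, h3, h4⟩
      have hne : u p.2 ≠ u p.1 := fun he => by
        have := u.injective he; omega
      rw [sperm_lt_iff a _ _ hne] at h4
      rcases h4 with ⟨h5, h6⟩ | ⟨h5, h6⟩
      · right; exact ⟨⟨h1, h2⟩, h3, h5⟩
      · left
        have e1 : p.2 = pb := u.injective (by rw [h5, hpb])
        have e2 : p.1 = pa := u.injective (by rw [h6, hpa])
        have : p = (p.1, p.2) := rfl
        rw [this, e1, e2]
    · rintro (he | ⟨⟨h1, h2⟩, h3, h4⟩)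
      · rw [he]
        refine ⟨⟨by omega, by omega⟩, hlt, ?_⟩
        simp only [hpa, hpb]
        rw [sperm_apply, sperm_apply]
        split_ifs <;> omega
      · have hne : u p.2 ≠ u p.1 := fun he => by
          have := u.injective he; omega
        refine ⟨⟨h1, h2⟩, h3, ?_⟩
        rw [sperm_lt_iff a _ _ hne]
        left
        refine ⟨h4, ?_⟩
        rintro ⟨ha1, ha2⟩
        have e1 : p.2 = pa := u.injective (by rw [ha1, hpa])
        have e2 : p.1 = pb := u.injective (by rw [ha2, hpb])
        omega
  rw [hset, Finset.card_insert_of_notMem]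
  simp only [Finset.mem_filter, Finset.mem_product, Finset.mem_range]
  rintro ⟨-, -, h4⟩
  rw [hpa, hpb] at h4
  omega

lemma inva_mul_left' {N a : ℕ} (u : Equiv.Perm ℕ) (pa pb : ℕ) (hpa : u pa = a)
    (hpb : u pb = a+1) (hpaN : pa ≤ N) (hpbN : pb ≤ N) (hlt : pb < pa) :
    inva N u = inva N (sperm a * u) + 1 := by
  have h1 : (sperm a * u) pb = a := by
    simp only [Equiv.Perm.mul_apply, hpb, sperm_apply]
    split_ifs <;> omega
  have h2 : (sperm a * u) pa = a + 1 := by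
    simp only [Equiv.Perm.mul_apply, hpa, sperm_apply]
    split_ifs <;> omega
  have := inva_mul_left (sperm a * u) pb pa h1 h2 hpbN hpaN hlt
  rwa [← mul_assoc, sperm_mul_self, one_mul] at this


/-- Master conjugation identity: `inva` of `s_a y s_a` vs `inva y`, with the two
±1 contributions controlled by explicit conditions. -/
lemma inva_conj {N a : ℕ} (y : Equiv.Perm ℕ) (ha : a + 1 ≤ N)
    (hpres : ∀ x, x ≤ N → y x ≤ N) (hpres' : ∀ x, x ≤ N → y⁻¹ x ≤ N) :
    inva N (sperm a * y * sperm a)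
      + (if y a < y (a+1) then 0 else 1) + (if sperm a (y⁻¹ a) < sperm a (y⁻¹ (a+1)) then 0 else 1)
    = inva N y + (if y a < y (a+1) then 1 else 0)
      + (if sperm a (y⁻¹ a) < sperm a (y⁻¹ (a+1)) then 1 else 0) := by
  classical
  set pa := sperm a (y⁻¹ a) with hpa
  set pb := sperm a (y⁻¹ (a+1)) with hpb
  have hupa : (y * sperm a) pa = a := by
    simp only [hpa, Equiv.Perm.mul_apply]
    change y (sperm a (sperm a (y⁻¹ a))) = a
    rw [sperm_sperm, Equiv.Perm.apply_inv_self]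
  have hupb : (y * sperm a) pb = a + 1 := by
    simp only [hpb, Equiv.Perm.mul_apply]
    change y (sperm a (sperm a (y⁻¹ (a+1)))) = a + 1
    rw [sperm_sperm, Equiv.Perm.apply_inv_self]
  have hpaN : pa ≤ N := sperm_le a N ha _ (hpres' a (by omega))
  have hpbN : pb ≤ N := sperm_le a N ha _ (hpres' (a+1) (by omega))
  have hne : pa ≠ pb := by
    intro he
    have : (y * sperm a) pa = (y * sperm a) pb := by rw [he]
    rw [hupa, hupb] at this; omega
  have hne2 : y a ≠ y (a+1) := by
    intro he; have := y.injective he; omega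
  have hstep1 : inva N (y * sperm a) + (if y a < y (a+1) then 0 else 1)
      = inva N y + (if y a < y (a+1) then 1 else 0) := by
    by_cases h : y a < y (a+1)
    · have e := inva_mul_right y ha h
      rw [if_pos h, if_pos h]; omega
    · have e := inva_mul_right' y ha (by omega)
      rw [if_neg h, if_neg h]; omega
  have hstep2 : inva N (sperm a * (y * sperm a)) + (if pa < pb then 0 else 1)
      = inva N (y * sperm a) + (if pa < pb then 1 else 0) := by
    by_cases h : pa < pb
    · have e := inva_mul_left (y * sperm a) pa pb hupa hupb hpaN hpbN h
      rw [if_pos h, if_pos h]; omega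
    · have e := inva_mul_left' (y * sperm a) pa pb hupa hupb hpaN hpbN (by omega)
      rw [if_neg h, if_neg h]; omega
  have hfin : sperm a * y * sperm a = sperm a * (y * sperm a) := by rw [mul_assoc]
  rw [hfin]
  omega

lemma theta_char (i j : ℕ) (hij : i < j) :
    (thetaFun j < thetaFun i ↔ (j = i+1 ∧ i % 2 = 1)) := by
  unfold thetaFun
  split_ifs <;> omega

lemma inva_theta (N : ℕ) (hN : N % 2 = 0) : inva N Theta = N / 2 := by
  classical
  unfold inva
  rw [← Finset.card_range (N/2)]
  apply Finset.card_bij' (fun p _ => p.1 / 2) (fun t _ => (2*t+1, 2*t+2))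
  case hi =>
    intro p hp
    simp only [Finset.mem_filter, Finset.mem_product, Finset.mem_range] at hp ⊢
    obtain ⟨⟨h1, h2⟩, h3, h4⟩ := hp
    rw [theta_apply, theta_apply, theta_char _ _ h3] at h4
    omega
  case hj =>
    intro t ht
    simp only [Finset.mem_range] at ht
    simp only [Finset.mem_filter, Finset.mem_product, Finset.mem_range]
    refine ⟨⟨by omega, by omega⟩, by omega, ?_⟩
    rw [theta_apply, theta_apply, theta_char _ _ (by omega)]
    omega
  case left_inv =>
    intro p hp
    simp only [Finset.mem_filter, Finset.mem_product, Finset.mem_range] at hp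
    obtain ⟨⟨h1, h2⟩, h3, h4⟩ := hp
    rw [theta_apply, theta_apply, theta_char _ _ h3] at h4
    apply Prod.ext_iff.mpr
    constructor <;> simp <;> omega
  case right_inv =>
    intro t ht
    simp only [Finset.mem_range] at ht
    simp
    omega


lemma card_lt_pairs (n : ℕ) :
    ((Finset.Icc 1 n ×ˢ Finset.Icc 1 n).filter fun p : ℕ × ℕ => p.1 < p.2).card
      = n * (n-1) / 2 := by
  classical
  set A := Finset.Icc 1 n ×ˢ Finset.Icc 1 n with hA
  have hcardA : A.card = n * n := by
    rw [hA, Finset.card_product, Nat.card_Icc]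
    simp
  have hswap : (A.filter fun p : ℕ × ℕ => p.1 < p.2).card
      = (A.filter fun p : ℕ × ℕ => p.2 < p.1).card := by
    apply Finset.card_bij' (fun p _ => (p.2, p.1)) (fun p _ => (p.2, p.1))
    case hi =>
      intro p hp
      simp only [hA, Finset.mem_filter, Finset.mem_product, Finset.mem_Icc] at hp ⊢
      omega
    case hj =>
      intro p hp
      simp only [hA, Finset.mem_filter, Finset.mem_product, Finset.mem_Icc] at hp ⊢
      omega
    case left_inv => intro p _; rfl
    case right_inv => intro p _; rfl
  have hdiag : (A.filter fun p : ℕ × ℕ => p.1 = p.2).card = n := by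
    have : ((Finset.Icc 1 n).card) = n := by rw [Nat.card_Icc]; omega
    rw [← this]
    apply Finset.card_bij' (fun p _ => p.1) (fun i _ => (i, i))
    case hi =>
      intro p hp
      simp only [hA, Finset.mem_filter, Finset.mem_product, Finset.mem_Icc] at hp ⊢
      omega
    case hj =>
      intro i hi
      simp only [hA, Finset.mem_filter, Finset.mem_product, Finset.mem_Icc] at hi ⊢
      exact ⟨by omega, trivial⟩
    case left_inv =>
      intro p hp
      simp only [hA, Finset.mem_filter, Finset.mem_product, Finset.mem_Icc] at hp
      apply Prod.ext_iff.mpr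
      constructor <;> simp <;> omega
    case right_inv => intro i _; rfl
  have hsum := Finset.card_filter_add_card_filter_not
    (s := A) (p := fun p : ℕ × ℕ => p.1 = p.2)
  have hunion : A.filter (fun p : ℕ × ℕ => ¬ p.1 = p.2)
      = A.filter (fun p : ℕ × ℕ => p.1 < p.2) ∪ A.filter (fun p : ℕ × ℕ => p.2 < p.1) := by
    rw [← Finset.filter_or]
    apply Finset.filter_congr
    intro p _
    constructor
    · intro h; omega
    · intro h; omega
  have hdisj : Disjoint (A.filter fun p : ℕ × ℕ => p.1 < p.2)
      (A.filter fun p : ℕ × ℕ => p.2 < p.1) := by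
    rw [Finset.disjoint_left]
    intro p h1 h2
    simp only [Finset.mem_filter] at h1 h2
    omega
  rw [hunion, Finset.card_union_of_disjoint hdisj, hdiag, hcardA, ← hswap] at hsum
  have hmp : n * (n - 1) = n * n - n := Nat.mul_pred n n
  omega

lemma inva_target (N n : ℕ) (hn : n % 2 = 0) (hN : N % 2 = 0) (hnN : n ≤ N)
    (z : Equiv.Perm ℕ) (hz0 : z 0 = 0) (hz1 : ∀ i, 1 ≤ i → i ≤ n → z i = n + 1 - i)
    (hz2 : ∀ i, n < i → z i = Theta i) :
    inva N z = n * (n-1) / 2 + (N - n) / 2 := by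
  classical
  unfold inva
  have hzhigh : ∀ j, n < j → z j = thetaFun j ∧ n + 1 ≤ z j := by
    intro j hj
    refine ⟨hz2 j hj, ?_⟩
    rw [hz2 j hj]
    exact theta_high n j hn hj
  have hchar : ∀ p : ℕ × ℕ, p ∈ (Finset.range (N+1)) ×ˢ (Finset.range (N+1)) →
      ((p.1 < p.2 ∧ z p.2 < z p.1) ↔
        ((1 ≤ p.1 ∧ p.1 < p.2 ∧ p.2 ≤ n) ∨ (n < p.1 ∧ p.2 = p.1 + 1 ∧ p.1 % 2 = 1))) := by
    intro p hp
    simp only [Finset.mem_product, Finset.mem_range] at hp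
    constructor
    · rintro ⟨h1, h2⟩
      rcases Nat.eq_zero_or_pos p.1 with h0 | h0
      · rw [h0, hz0] at h2; omega
      by_cases hp2 : p.2 ≤ n
      · left; exact ⟨h0, h1, hp2⟩
      push_neg at hp2
      by_cases hp1 : p.1 ≤ n
      · exfalso
        have e1 : z p.1 = n + 1 - p.1 := hz1 p.1 h0 hp1
        have e2 := hzhigh p.2 hp2
        omega
      · push_neg at hp1
        right
        have e1 := hzhigh p.1 hp1
        have e2 := hzhigh p.2 (by omega)
        rw [e1.1, e2.1] at h2
        rw [theta_char _ _ h1] at h2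
        exact ⟨hp1, h2⟩
    · rintro (⟨h1, h2, h3⟩ | ⟨h1, h2, h3⟩)
      · have e1 : z p.1 = n + 1 - p.1 := hz1 p.1 h1 (by omega)
        have e2 : z p.2 = n + 1 - p.2 := hz1 p.2 (by omega) h3
        constructor
        · exact h2
        · omega
      · have e1 := hzhigh p.1 h1
        have e2 := hzhigh p.2 (by omega)
        refine ⟨by omega, ?_⟩
        rw [e1.1, e2.1, theta_char _ _ (by omega)]
        omega
  have hdisj : Disjoint
      (((Finset.range (N+1)) ×ˢ (Finset.range (N+1))).filter
        (fun p : ℕ × ℕ => 1 ≤ p.1 ∧ p.1 < p.2 ∧ p.2 ≤ n))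
      (((Finset.range (N+1)) ×ˢ (Finset.range (N+1))).filter
        (fun p : ℕ × ℕ => n < p.1 ∧ p.2 = p.1 + 1 ∧ p.1 % 2 = 1)) := by
    rw [Finset.disjoint_left]
    intro p h1 h2
    simp only [Finset.mem_filter] at h1 h2
    omega
  have c1 : (((Finset.range (N+1)) ×ˢ (Finset.range (N+1))).filter
      (fun p : ℕ × ℕ => 1 ≤ p.1 ∧ p.1 < p.2 ∧ p.2 ≤ n)).card = n * (n-1) / 2 := by
    have hset : ((Finset.range (N+1)) ×ˢ (Finset.range (N+1))).filter
        (fun p : ℕ × ℕ => 1 ≤ p.1 ∧ p.1 < p.2 ∧ p.2 ≤ n)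
        = (Finset.Icc 1 n ×ˢ Finset.Icc 1 n).filter fun p : ℕ × ℕ => p.1 < p.2 := by
      ext p
      simp only [Finset.mem_filter, Finset.mem_product, Finset.mem_range, Finset.mem_Icc]
      omega
    rw [hset, card_lt_pairs]
  have c2 : (((Finset.range (N+1)) ×ˢ (Finset.range (N+1))).filter
      (fun p : ℕ × ℕ => n < p.1 ∧ p.2 = p.1 + 1 ∧ p.1 % 2 = 1)).card = (N - n) / 2 := by
    rw [← Finset.card_range ((N-n)/2)]
    apply Finset.card_bij' (fun p _ => (p.1 - n - 1) / 2) (fun t _ => (n + 2*t+1, n + 2*t+2))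
    case hi =>
      intro p hp
      simp only [Finset.mem_filter, Finset.mem_product, Finset.mem_range] at hp ⊢
      omega
    case hj =>
      intro t ht
      simp only [Finset.mem_range] at ht
      rw [Finset.mem_filter]
      refine ⟨?_, ?_, ?_, ?_⟩
      · rw [Finset.mem_product]
        constructor <;> rw [Finset.mem_range] <;> omega
      · show n < n + 2*t+1
        omega
      · show n + 2*t+2 = (n + 2*t+1) + 1
        omega
      · show (n + 2*t+1) % 2 = 1
        omega
    case left_inv =>
      intro p hp
      simp only [Finset.mem_filter, Finset.mem_product, Finset.mem_range] at hp
      apply Prod.ext_iff.mpr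
      constructor <;> simp <;> omega
    case right_inv =>
      intro t ht
      simp only [Finset.mem_range] at ht
      show (n + 2*t + 1 - n - 1) / 2 = t
      omega
  rw [Finset.filter_congr hchar, Finset.filter_or, Finset.card_union_of_disjoint hdisj, c1, c2]


lemma fpfConj_inv (v : List ℕ) : (fpfConj v)⁻¹ = fpfConj v := by
  have hy := fpfConj_involutive v
  ext x
  apply (fpfConj v).injective
  rw [Equiv.Perm.apply_inv_self]
  exact (hy x).symm

lemma lower_bound (N : ℕ) (hN : N % 2 = 0) :
    ∀ v : List ℕ, PosWord v → (∀ x ∈ v, x + 2 ≤ N) →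
      inva N (fpfConj v) ≤ N / 2 + 2 * v.length := by
  intro v
  induction v using List.reverseRecOn with
  | nil => intro _ _; rw [fpfConj_nil, inva_theta N hN]; simp
  | append_singleton v a ih =>
    intro hv hb
    have hv' : PosWord v := fun x hx => hv x (by simp [hx])
    have hb' : ∀ x ∈ v, x + 2 ≤ N := fun x hx => hb x (by simp [hx])
    have ha : 0 < a := hv a (by simp)
    have haN : a + 2 ≤ N := hb a (by simp)
    rw [fpfConj_concat]
    have hpres : ∀ x, x ≤ N → fpfConj v x ≤ N :=
      fpfConj_le v N hN (fun x hx => by have := hb' x hx; omega)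
    have hpres' : ∀ x, x ≤ N → (fpfConj v)⁻¹ x ≤ N := by
      rw [fpfConj_inv]; exact hpres
    have key := inva_conj (N := N) (a := a) (fpfConj v) (by omega) hpres hpres'
    have hih := ih hv' hb'
    simp only [List.length_append, List.length_cons, List.length_nil]
    by_cases h1 : fpfConj v a < fpfConj v (a+1) <;>
      by_cases h2 : sperm a ((fpfConj v)⁻¹ a) < sperm a ((fpfConj v)⁻¹ (a+1)) <;>
      simp only [h1, h2, if_true, if_false, if_pos, if_neg, not_false_iff] at key <;>
      omega

lemma letters_bound (N n : ℕ) (hn : n % 2 = 0) (hN : N % 2 = 0) (hnN : n + 2 ≤ N) :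
    ∀ v : List ℕ, ∀ y : Equiv.Perm ℕ, PosWord v → (∀ x ∈ v, x + 2 ≤ N) →
      fpfConj v = y → (∀ j, n < j → y j = Theta j) →
      inva N y = N / 2 + 2 * v.length → ∀ x ∈ v, x < n := by
  intro v
  induction v using List.reverseRecOn with
  | nil => intro y _ _ _ _ _ x hx; simp at hx
  | append_singleton v a ih =>
    intro y hv hb hconj hyTheta hexact
    have hv' : PosWord v := fun x hx => hv x (by simp [hx])
    have hb' : ∀ x ∈ v, x + 2 ≤ N := fun x hx => hb x (by simp [hx])
    have ha : 0 < a := hv a (by simp)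
    have haN : a + 2 ≤ N := hb a (by simp)
    have hyy : y = sperm a * fpfConj v * sperm a := by rw [← hconj, fpfConj_concat]
    have hswap : ∀ w : Equiv.Perm ℕ, sperm a * (sperm a * w * sperm a) * sperm a = w := by
      intro w
      have e : sperm a * (sperm a * w * sperm a) * sperm a
          = (sperm a * sperm a) * w * (sperm a * sperm a) := by group
      rw [e, sperm_mul_self, one_mul, mul_one]
    have hy'y : fpfConj v = sperm a * y * sperm a := by rw [hyy, hswap]
    have hLB := lower_bound N hN v hv' hb'
    have hyinv : y⁻¹ = y := by rw [← hconj, fpfConj_inv]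
    have hypres : ∀ x, x ≤ N → y x ≤ N := by
      rw [← hconj]
      exact fpfConj_le _ N hN (fun x hx => by have := hb x hx; omega)
    have hypres' : ∀ x, x ≤ N → y⁻¹ x ≤ N := by rw [hyinv]; exact hypres
    have key := inva_conj (N := N) (a := a) y (by omega) hypres hypres'
    rw [← hy'y] at key
    have hlen : (v ++ [a]).length = v.length + 1 := by simp
    rw [hlen] at hexact
    have hyinvol : Function.Involutive y := by rw [← hconj]; exact fpfConj_involutive _
    by_cases hcase : a < n
    · -- recurse
      have hyTheta' : ∀ j, n < j → fpfConj v j = Theta j := by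
        intro j hj
        rw [hy'y]
        simp only [Equiv.Perm.mul_apply]
        have e1 : sperm a j = j := by
          rw [sperm_apply]; split_ifs <;> omega
        rw [e1, hyTheta j hj]
        have e2 : n + 1 ≤ Theta j := theta_high n j hn hj
        rw [sperm_apply]; split_ifs <;> omega
      have hexact' : inva N (fpfConj v) = N / 2 + 2 * v.length := by
        by_cases h1 : y a < y (a+1) <;>
          by_cases h2 : sperm a (y⁻¹ a) < sperm a (y⁻¹ (a+1)) <;>
          simp only [h1, h2, if_true, if_false, if_pos, if_neg, not_false_iff] at key <;>
          omega
      intro x hx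
      rcases List.mem_append.mp hx with hx' | hx'
      · exact ih (fpfConj v) hv' hb' rfl hyTheta' hexact' x hx'
      · simp at hx'
        omega
    · -- contradiction
      exfalso
      push_neg at hcase
      have hya1 : y (a+1) = thetaFun (a+1) := hyTheta (a+1) (by omega)
      have hcontra : inva N y ≤ inva N (fpfConj v) := by
        rcases Nat.lt_or_ge n a with hgt | heq
        · -- a > n
          have hya : y a = thetaFun a := hyTheta a hgt
          rcases Nat.even_or_odd a with he | ho
          · -- a even : y a = a - 1, y (a+1) = a + 2
            have ea : y a = a - 1 := by
              rw [hya]; unfold thetaFun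
              have : ¬ a % 2 = 1 := by
                rcases he with ⟨t, ht⟩; omega
              rw [if_neg this]
            have ea1 : y (a+1) = a + 2 := by
              rw [hya1]; unfold thetaFun
              have : (a+1) % 2 = 1 := by
                rcases he with ⟨t, ht⟩; omega
              rw [if_pos this]
            have e1 : y a < y (a+1) := by omega
            have e2 : sperm a (y⁻¹ a) < sperm a (y⁻¹ (a+1)) := by
              have i1 : y⁻¹ a = a - 1 := by rw [hyinv, ea]
              have i2 : y⁻¹ (a+1) = a + 2 := by rw [hyinv, ea1]
              rw [i1, i2, sperm_apply, sperm_apply]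
              split_ifs <;> omega
            rw [if_pos e1, if_pos e2, if_pos e1, if_pos e2] at key
            omega
          · -- a odd : y a = a + 1, y (a+1) = a
            have ea : y a = a + 1 := by
              rw [hya]; unfold thetaFun
              rcases ho with ⟨t, ht⟩
              rw [if_pos (by omega)]
            have ea1 : y (a+1) = a := by
              rw [hya1]; unfold thetaFun
              rcases ho with ⟨t, ht⟩
              rw [if_neg (by omega)]
              omega
            have e1 : ¬ (y a < y (a+1)) := by omega
            have e2 : sperm a (y⁻¹ a) < sperm a (y⁻¹ (a+1)) := by
              have i1 : y⁻¹ a = a + 1 := by rw [hyinv, ea]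
              have i2 : y⁻¹ (a+1) = a := by rw [hyinv, ea1]
              rw [i1, i2, sperm_apply, sperm_apply]
              split_ifs <;> omega
            rw [if_neg e1, if_pos e2, if_neg e1, if_pos e2] at key
            omega
        · -- a = n
          have heq' : a = n := by omega
          subst heq'
          have hbn : y a ≤ a := by
            by_contra hc
            push_neg at hc
            have e1 : y (y a) = a := hyinvol a
            have e2 : y (y a) = Theta (y a) := hyTheta (y a) hc
            have e3 := theta_high a (y a) (by omega) hc
            omega
          have hbne : y a ≠ a := by
            rw [← hconj]
            exact fpfConj_fpf _ hv a (by omega)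
          have hbn0 : y a ≠ 0 := by
            intro h0
            have : y a = y 0 := by
              rw [h0, ← hconj, fpfConj_zero _ hv]
            have := y.injective this
            omega
          have ea1 : y (a+1) = a + 2 := by
            rw [hya1]; unfold thetaFun
            rw [if_pos (by omega)]
          have e1 : y a < y (a+1) := by omega
          have e2 : sperm a (y⁻¹ a) < sperm a (y⁻¹ (a+1)) := by
            have i1 : y⁻¹ a = y a := by
              rw [hyinv]
            have i2 : y⁻¹ (a+1) = a + 2 := by rw [hyinv, ea1]
            rw [i1, i2, sperm_apply, sperm_apply]
            split_ifs <;> omega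
          rw [if_pos e1, if_pos e2, if_pos e1, if_pos e2] at key
          omega
      omega



def cval (a m x : ℕ) : ℕ :=
  if a ≤ x ∧ x < a + m then x + 1 else if x = a + m ∧ 0 < m then a else x

lemma cprod : ∀ (m a x : ℕ), wprod (List.range' a m) x = cval a m x := by
  intro m
  induction m with
  | zero =>
    intro a x
    show wprod [] x = cval a 0 x
    rw [wprod_nil]
    unfold cval
    split_ifs <;> first | rfl | omega
  | succ m ih =>
    intro a x
    rw [List.range'_succ, wprod_cons, Equiv.Perm.mul_apply, ih (a+1), sperm_apply]
    unfold cval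
    split_ifs <;> omega

def rval (n m x : ℕ) : ℕ :=
  if x < 2 ∨ n < x then x
  else if 2*x ≤ n then min (x + m) (2*x - 1)
  else if x + m ≤ n then x + m else 2*(n + 1 - x)

lemma rprodRows (n : ℕ) (hn : n % 2 = 0) : ∀ m, (m = 0 ∨ 2*m + 2 ≤ n) → ∀ x,
    wprod (((List.range' 1 m).reverse).flatMap fun r => List.range' (2*r) (n - 2*r)) x
      = rval n m x := by
  intro m
  induction m with
  | zero =>
    intro _ x
    show wprod [] x = rval n 0 x
    rw [wprod_nil, Equiv.Perm.one_apply]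
    unfold rval
    split_ifs <;> omega
  | succ m ih =>
    intro hm x
    have hm' : 2*m + 4 ≤ n := by omega
    rw [List.range'_concat, List.reverse_append]
    simp only [List.reverse_singleton, List.singleton_append, List.flatMap_cons]
    rw [wprod_append, Equiv.Perm.mul_apply, ih (by omega) x, cprod]
    unfold cval rval
    split_ifs <;> omega



lemma wprod_zmax (n k : ℕ) (hn : n = 2 * k) :
    ∀ x, wprod (zmaxWord n) x = rval n (n/2 - 1) x := by
  intro x
  have h : zmaxWord n
      = ((List.range' 1 (n/2 - 1)).reverse).flatMap fun r => List.range' (2*r) (n - 2*r) := rfl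
  rw [h]
  apply rprodRows n (by omega) (n/2 - 1)
  rcases le_or_gt k 1 with hle | hlt
  · left; omega
  · right; omega

set_option maxHeartbeats 1600000 in
lemma fpf_zmax (n k : ℕ) (hn : n = 2 * k) (z : Equiv.Perm ℕ)
    (hz0 : z 0 = 0)
    (hz1 : ∀ i, 1 ≤ i → i ≤ n → z i = n + 1 - i)
    (hz2 : ∀ i, n < i → z i = Theta i) :
    fpfConj (zmaxWord n) = z := by
  have main : ∀ x, wprod (zmaxWord n) (z x) = Theta (wprod (zmaxWord n) x) := by
    intro x
    rw [wprod_zmax n k hn, wprod_zmax n k hn, theta_apply]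
    rcases Nat.eq_zero_or_pos x with hx0 | hx0
    · rw [hx0, hz0]
      unfold rval thetaFun
      split_ifs <;> first | contradiction | omega
    by_cases hxn : x ≤ n
    · rw [hz1 x hx0 hxn]
      unfold rval thetaFun
      split_ifs <;> first | contradiction | omega
    · push_neg at hxn
      rw [hz2 x hxn, theta_apply]
      have ht := theta_high n x (by omega) hxn
      rw [theta_apply] at ht
      unfold rval thetaFun
      split_ifs <;> first | contradiction | omega
  apply Equiv.ext
  intro x
  rw [fpfConj_eq]
  simp only [Equiv.Perm.mul_apply]
  rw [← main x, Equiv.Perm.inv_apply_self]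

lemma sum_rows (n : ℕ) : ∀ t, 2*t ≤ n →
    ((List.range' 1 t).map (fun r => n - 2*r)).sum + t*(t+1) = t * n := by
  intro t
  induction t with
  | zero => simp
  | succ t ih =>
    intro ht
    rw [List.range'_concat, List.map_append, List.sum_append]
    have e0 := ih (by omega)
    have e1 : (t+1)*(t+1+1) = t*(t+1) + 2*(t+1) := by ring
    have e2 : (t+1)*n = t*n + n := by ring
    simp only [List.map_cons, List.map_nil, List.sum_cons, List.sum_nil]
    omega

lemma zmax_len (n k : ℕ) (hn : n = 2 * k) : (zmaxWord n).length = k * (k-1) := by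
  have h : zmaxWord n
      = ((List.range' 1 (n/2 - 1)).reverse).flatMap fun r => List.range' (2*r) (n - 2*r) := rfl
  rw [h, List.length_flatMap]
  have hmap : (List.map (fun r => (List.range' (2*r) (n - 2*r)).length)
      ((List.range' 1 (n/2 - 1)).reverse)).sum
      = ((List.range' 1 (n/2 - 1)).reverse.map (fun r => n - 2*r)).sum := by
    congr 1
    apply List.map_congr_left
    intro r _
    simp [List.length_range']
  rw [hmap, List.map_reverse, List.sum_reverse]
  have hk : n / 2 - 1 = k - 1 := by omega
  rw [hk]
  have hs := sum_rows n (k-1) (by omega)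
  have e1 : (k-1)*n = (k-1)*k + (k-1)*k := by rw [hn]; ring
  have e2 : k * (k-1) = (k-1) * k := by ring
  have e3 : (k-1)*(k-1+1) = (k-1)*k := by
    rcases k with _ | k'
    · simp
    · simp [Nat.succ_sub_one]
  omega

lemma zmax_pos (n : ℕ) : PosWord (zmaxWord n) := by
  intro x hx
  unfold zmaxWord at hx
  rw [List.mem_flatMap] at hx
  obtain ⟨r, hr, hx⟩ := hx
  rw [List.mem_reverse, List.mem_range'_1] at hr
  rw [List.mem_range'_1] at hx
  omega

lemma le_foldr_max (v : List ℕ) : ∀ x ∈ v, x ≤ v.foldr max 0 := by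
  induction v with
  | nil => intro x hx; simp at hx
  | cons a v ih =>
    intro x hx
    rcases List.mem_cons.mp hx with rfl | h
    · simp only [List.foldr_cons]
      omega
    · have := ih x h
      simp only [List.foldr_cons]
      omega


end ZX

/-- for `z_max = n ⋯ 321 ∈ F∞`, the reading word `zmaxWord n`
is an FPF-involution word for `z_max`, and every FPF-involution word for
`z_max` has length `(n−2) + (n−4) + ⋯ + 2 = (n/2)(n/2 − 1)` and all letters
at most `n − 1`. -/
theorem zmax_word (n : ℕ) (hn : Even n) (z : Equiv.Perm ℕ)
    (hz0 : z 0 = 0)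
    (hz1 : ∀ i, 1 ≤ i → i ≤ n → z i = n + 1 - i)
    (hz2 : ∀ i, n < i → z i = Theta i) :
    (fpfConj (zmaxWord n) = z ∧
      ∀ v : List ℕ, PosWord v → fpfConj v = z → (zmaxWord n).length ≤ v.length) ∧
    (∀ v : List ℕ, PosWord v → fpfConj v = z →
      (∀ u : List ℕ, PosWord u → fpfConj u = z → v.length ≤ u.length) →
      v.length = (n / 2) * (n / 2 - 1) ∧ ∀ x ∈ v, x ≤ n - 1) := by
  obtain ⟨k, hk⟩ := hn
  have hn2 : n = 2 * k := by omega
  have hnmod : n % 2 = 0 := by omega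
  have h1a : fpfConj (zmaxWord n) = z := ZX.fpf_zmax n k hn2 z hz0 hz1 hz2
  have hlen : (zmaxWord n).length = k * (k-1) := ZX.zmax_len n k hn2
  have hmul1 : n * (n-1) = 2 * (k * (2*k - 1)) := by
    rw [hn2]
    exact mul_assoc 2 k (2*k - 1)
  have hmul2 : k * (2*k - 1) = 2 * (k * (k-1)) + k := by
    rcases k with _ | k'
    · simp
    · have h1 : 2*(k'+1) - 1 = 2*k' + 1 := by omega
      rw [h1, Nat.succ_sub_one]
      ring
  have hlb : ∀ v : List ℕ, PosWord v → fpfConj v = z → k * (k-1) ≤ v.length := by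
    intro v hv hconj
    set M := v.foldr max 0 with hM
    set N := n + 2 * M + 2 with hN
    have hNmod : N % 2 = 0 := by omega
    have hb : ∀ x ∈ v, x + 2 ≤ N := by
      intro x hx
      have := ZX.le_foldr_max v x hx
      omega
    have hlow := ZX.lower_bound N hNmod v hv hb
    rw [hconj] at hlow
    have ht := ZX.inva_target N n hnmod hNmod (by omega) z hz0 hz1 hz2
    omega
  refine ⟨⟨h1a, ?_⟩, ?_⟩
  · intro v hv hconj
    rw [hlen]
    exact hlb v hv hconj
  · intro v hv hconj hmin
    have hle : v.length ≤ k * (k-1) := by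
      have := hmin (zmaxWord n) (ZX.zmax_pos n) h1a
      omega
    have hge := hlb v hv hconj
    have hvlen : v.length = k * (k-1) := le_antisymm hle hge
    constructor
    · rw [show n/2 = k from by omega]
      exact hvlen
    · intro x hx
      set M := v.foldr max 0 with hM
      set N := n + 2 * M + 2 with hN
      have hNmod : N % 2 = 0 := by omega
      have hb : ∀ y ∈ v, y + 2 ≤ N := by
        intro y hy
        have := ZX.le_foldr_max v y hy
        omega
      have ht := ZX.inva_target N n hnmod hNmod (by omega) z hz0 hz1 hz2
      have hexact : ZX.inva N z = N / 2 + 2 * v.length := by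
        rw [ht, hvlen]
        omega
      have := ZX.letters_bound N n hnmod hNmod (by omega) v z hv hb hconj hz2 hexact x hx
      omega
end

section
/- If z is an involution in S∞ and w = w₁ w₂ ⋯ w_l is an orthogonal Hecke word for z with l ≥ 2, then the word w₂ w₁ w₃ ⋯ w_l obtained by swapping the first two letters is also an orthogonal Hecke word for z. -/
/-- The Demazure (0-Hecke) product of a permutation with the simple
transposition `s_i = (i, i+1)`. -/
def hecke (π : Equiv.Perm ℕ) (i : ℕ) : Equiv.Perm ℕ :=
  if π i < π (i + 1) then π * Equiv.swap i (i + 1) else π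

/-- The 0-Hecke (Demazure) product of a word. -/
def heckeProd (w : List ℕ) : Equiv.Perm ℕ := w.foldl hecke 1

/-- Left Demazure product: `U_i U_z = U_{demLeft i z}` in the 0-Hecke
algebra. -/
def demLeft (i : ℕ) (z : Equiv.Perm ℕ) : Equiv.Perm ℕ :=
  if z⁻¹ i < z⁻¹ (i + 1) then Equiv.swap i (i + 1) * z else z

/-- The twisted 0-Hecke action on involutions: `z ∗ i` is determined by
`U_{z ∗ i} = U_i U_z U_i`. -/
def oAct (z : Equiv.Perm ℕ) (i : ℕ) : Equiv.Perm ℕ := hecke (demLeft i z) i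

/-!
After one letter the word has produced the simple transposition `s_a`; the second letter `b`
then gives `s_b s_a` when `|a - b| ≥ 2` (the right factor `s_b` is absorbed, since `s_b s_a`
already has a descent at `b`) and `s_b s_a s_b` when `|a - b| = 1`. The two orders therefore
agree by commutation of distant simple transpositions and by the braid relation, and the
remaining letters act identically on equal permutations.
-/

open Equiv

lemma oAct_one (i : ℕ) : oAct 1 i = swap i (i + 1) := by
  simp [oAct, demLeft, hecke]

lemma oAct_swap_of_far {a b : ℕ} (h : a + 1 < b ∨ b + 1 < a) :
    oAct (swap a (a + 1)) b = swap b (b + 1) * swap a (a + 1) := by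
  have hdem : (swap a (a + 1))⁻¹ b < (swap a (a + 1))⁻¹ (b + 1) := by
    simp only [swap_inv, swap_apply_def]
    split_ifs <;> omega
  have hdesc : ¬ (swap b (b + 1) * swap a (a + 1)) b <
      (swap b (b + 1) * swap a (a + 1)) (b + 1) := by
    simp only [Perm.mul_apply, swap_apply_def]
    split_ifs <;> omega
  rw [oAct, demLeft, if_pos hdem, hecke, if_neg hdesc]

lemma oAct_swap_of_adjacent {a b : ℕ} (h : b = a + 1 ∨ a = b + 1) :
    oAct (swap a (a + 1)) b = swap b (b + 1) * swap a (a + 1) * swap b (b + 1) := by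
  have hdem : (swap a (a + 1))⁻¹ b < (swap a (a + 1))⁻¹ (b + 1) := by
    simp only [swap_inv, swap_apply_def]
    split_ifs <;> omega
  have hasc : (swap b (b + 1) * swap a (a + 1)) b <
      (swap b (b + 1) * swap a (a + 1)) (b + 1) := by
    simp only [Perm.mul_apply, swap_apply_def]
    split_ifs <;> omega
  rw [oAct, demLeft, if_pos hdem, hecke, if_pos hasc]

lemma swap_succ_braid (a : ℕ) :
    swap a (a + 1) * swap (a + 1) (a + 1 + 1) * swap a (a + 1) =
      swap (a + 1) (a + 1 + 1) * swap a (a + 1) * swap (a + 1) (a + 1 + 1) := by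
  ext x
  simp only [Perm.mul_apply, swap_apply_def]
  split_ifs <;> omega

lemma swap_succ_mul_comm_of_far {a b : ℕ} (h : a + 1 < b ∨ b + 1 < a) :
    swap b (b + 1) * swap a (a + 1) = swap a (a + 1) * swap b (b + 1) :=
  (Perm.disjoint_swap_swap (by simp; omega)).commute.eq

lemma oAct_oAct_one_comm (a b : ℕ) : oAct (oAct 1 a) b = oAct (oAct 1 b) a := by
  rw [oAct_one, oAct_one]
  obtain rfl | hadj | hfar : a = b ∨ (b = a + 1 ∨ a = b + 1) ∨ (a + 1 < b ∨ b + 1 < a) := by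
    omega
  · rfl
  · rw [oAct_swap_of_adjacent hadj, oAct_swap_of_adjacent hadj.symm]
    rcases hadj with rfl | rfl
    exacts [(swap_succ_braid a).symm, swap_succ_braid b]
  · rw [oAct_swap_of_far hfar, oAct_swap_of_far hfar.symm, swap_succ_mul_comm_of_far hfar]

theorem orthogonal_hecke_word_swap_first_two_general
    (a b : ℕ) (rest : List ℕ)
    (z : Equiv.Perm ℕ)
    (h : List.foldl oAct 1 (a :: b :: rest) = z) :
    List.foldl oAct 1 (b :: a :: rest) = z := by
  rwa [List.foldl_cons, List.foldl_cons, oAct_oAct_one_comm b a]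

/-- if `w₁ w₂ ⋯ w_l` is an orthogonal Hecke word for an
involution `z` (with `l ≥ 2`), then so is `w₂ w₁ w₃ ⋯ w_l`. -/
theorem orthogonal_hecke_word_swap_first_two
    (a b : ℕ) (rest : List ℕ) (ha : 0 < a) (hb : 0 < b) (hrest : PosWord rest)
    (z : Equiv.Perm ℕ)
    (h : List.foldl oAct 1 (a :: b :: rest) = z) :
    List.foldl oAct 1 (b :: a :: rest) = z :=
  orthogonal_hecke_word_swap_first_two_general a b rest z h
end

section
/- In the 0-Hecke module N∞ over the 0-Hecke algebra of S∞, for every even index i one has N_Θ U_i U_{i−1} = N_Θ U_i U_{i+1}. -/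
/-- The right action of the 0-Hecke generator `U_i` on the module `N∞`:
`none` encodes the zero element, and `some z` encodes the basis element `N_z`. -/
def nAct (x : Option (Equiv.Perm ℕ)) (i : ℕ) : Option (Equiv.Perm ℕ) :=
  match x with
  | none => none
  | some z =>
    if z i < z (i + 1) then some (sperm i * z * sperm i)
    else if z i = i + 1 ∧ z (i + 1) = i then none
    else some z

lemma Theta_apply (n : ℕ) : Theta n = thetaFun n := rfl

lemma sperm_spec (j n : ℕ) :
    (n = j ∧ sperm j n = j+1) ∨ (n = j+1 ∧ sperm j n = j) ∨
      (n ≠ j ∧ n ≠ j+1 ∧ sperm j n = n) := by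
  simp only [sperm, Equiv.swap_apply_def]
  split_ifs <;> simp_all

lemma theta_spec (n : ℕ) :
    (n % 2 = 1 ∧ thetaFun n = n+1) ∨ (n % 2 = 0 ∧ thetaFun n = n-1) := by
  simp only [thetaFun]; split_ifs <;> omega

lemma key (k n : ℕ) :
    sperm (2*k+1) (sperm (2*k+2) (thetaFun (sperm (2*k+2) (sperm (2*k+1) n))))
      = sperm (2*k+3) (sperm (2*k+2) (thetaFun (sperm (2*k+2) (sperm (2*k+3) n)))) := by
  have a1 := sperm_spec (2*k+1) n
  have a2 := sperm_spec (2*k+2) (sperm (2*k+1) n)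
  have a3 := theta_spec (sperm (2*k+2) (sperm (2*k+1) n))
  have a4 := sperm_spec (2*k+2) (thetaFun (sperm (2*k+2) (sperm (2*k+1) n)))
  have a5 := sperm_spec (2*k+1) (sperm (2*k+2) (thetaFun (sperm (2*k+2) (sperm (2*k+1) n))))
  have b1 := sperm_spec (2*k+3) n
  have b2 := sperm_spec (2*k+2) (sperm (2*k+3) n)
  have b3 := theta_spec (sperm (2*k+2) (sperm (2*k+3) n))
  have b4 := sperm_spec (2*k+2) (thetaFun (sperm (2*k+2) (sperm (2*k+3) n)))
  have b5 := sperm_spec (2*k+3) (sperm (2*k+2) (thetaFun (sperm (2*k+2) (sperm (2*k+3) n))))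
  omega

/-- for every even index `i` (with `i ≥ 2`),
`N_Θ U_i U_{i−1} = N_Θ U_i U_{i+1}` in the 0-Hecke module `N∞`. -/
theorem nTheta_relation (i : ℕ) (h2 : 2 ≤ i) (he : Even i) :
    List.foldl nAct (some Theta) [i, i - 1] =
      List.foldl nAct (some Theta) [i, i + 1] := by
  obtain ⟨m, rfl⟩ := he
  obtain ⟨k, rfl⟩ : ∃ k, m = k + 1 := ⟨m - 1, by omega⟩
  have hi : k + 1 + (k + 1) = 2*k+2 := by ring
  rw [hi]
  have hsub : 2*k+2 - 1 = 2*k+1 := by omega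
  simp only [List.foldl, hsub]
  set z : Equiv.Perm ℕ := sperm (2*k+2) * Theta * sperm (2*k+2) with hz
  have step1 : nAct (some Theta) (2*k+2) = some z := by
    simp only [nAct]
    rw [if_pos]
    have h1 := sperm_spec 0 0  -- dummy
    have t1 := theta_spec (2*k+2)
    have t2 := theta_spec (2*k+2+1)
    simp only [Theta_apply]
    omega
  rw [step1]
  have zval : ∀ n, z n = sperm (2*k+2) (thetaFun (sperm (2*k+2) n)) := by
    intro n; simp [hz, Equiv.Perm.mul_apply, Theta_apply]
  have z1 : z (2*k+1) = 2*k+3 := by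
    rw [zval]
    have a2 := sperm_spec (2*k+2) (2*k+1)
    have a3 := theta_spec (sperm (2*k+2) (2*k+1))
    have a4 := sperm_spec (2*k+2) (thetaFun (sperm (2*k+2) (2*k+1)))
    omega
  have z2 : z (2*k+2) = 2*k+4 := by
    rw [zval]
    have a2 := sperm_spec (2*k+2) (2*k+2)
    have a3 := theta_spec (sperm (2*k+2) (2*k+2))
    have a4 := sperm_spec (2*k+2) (thetaFun (sperm (2*k+2) (2*k+2)))
    omega
  have z3 : z (2*k+3) = 2*k+1 := by
    rw [zval]
    have a2 := sperm_spec (2*k+2) (2*k+3)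
    have a3 := theta_spec (sperm (2*k+2) (2*k+3))
    have a4 := sperm_spec (2*k+2) (thetaFun (sperm (2*k+2) (2*k+3)))
    omega
  have z4 : z (2*k+4) = 2*k+2 := by
    rw [zval]
    have a2 := sperm_spec (2*k+2) (2*k+4)
    have a3 := theta_spec (sperm (2*k+2) (2*k+4))
    have a4 := sperm_spec (2*k+2) (thetaFun (sperm (2*k+2) (2*k+4)))
    omega
  have stepL : nAct (some z) (2*k+1) = some (sperm (2*k+1) * z * sperm (2*k+1)) := by
    simp only [nAct]
    rw [if_pos]
    rw [z1]
    have : z (2*k+1+1) = 2*k+4 := by rw [show 2*k+1+1 = 2*k+2 by ring, z2]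
    omega
  have stepR : nAct (some z) (2*k+3) = some (sperm (2*k+3) * z * sperm (2*k+3)) := by
    simp only [nAct]
    rw [if_pos]
    rw [z3]
    have : z (2*k+3+1) = 2*k+2 := by rw [show 2*k+3+1 = 2*k+4 by ring, z4]
    omega
  rw [show 2*k+2+1 = 2*k+3 by ring, stepL, stepR]
  congr 1
  ext n
  simp only [Equiv.Perm.mul_apply, zval]
  exact key k n
end
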